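/- arXiv:1711.05255 — 2 statements merged into one kernel-verified Lean document; each statement's English description precedes it below -/
import Mathlib

section
/- Echo state property as uniqueness over bi-infinite time: let W^res be an N×N real matrix with ℓ²-operator norm strictly less than 1, let W^in be an N×D real matrix, and let u : ℤ → ℝ^D be any input signal. If x, x̃ : ℤ → ℝ^N are two bounded state trajectories both satisfying x(t+1) = tanh.(W^res x(t) + W^in u(t+1)) for all t ∈ ℤ, then x(t) = x̃(t) for every t ∈ ℤ; i.e., the echo state at each time is uniquely determined by the left-infinite input history. -/
open Filter Topology

/-- Componentwise hyperbolic tangent on Euclidean space. -/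
noncomputable def tanhVec {n : ℕ} (v : EuclideanSpace ℝ (Fin n)) : EuclideanSpace ℝ (Fin n) :=
  WithLp.toLp 2 (fun i => Real.tanh (v i))

/-- The action `x ↦ W x` of a matrix on Euclidean space (equal to `Matrix.mulVec`). -/
noncomputable def mulVecE {m n : ℕ} (W : Matrix (Fin m) (Fin n) ℝ)
    (x : EuclideanSpace ℝ (Fin n)) : EuclideanSpace ℝ (Fin m) :=
  Matrix.toEuclideanLin W x

/-- The ℓ²-operator norm of a matrix (its largest singular value). -/
noncomputable def opNorm {m n : ℕ} (W : Matrix (Fin m) (Fin n) ℝ) : ℝ :=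
  ‖LinearMap.toContinuousLinearMap (Matrix.toEuclideanLin W)‖

lemma hasDerivAt_tanh (x : ℝ) : HasDerivAt Real.tanh (1 / Real.cosh x ^ 2) x := by
  have h := (Real.hasDerivAt_sinh x).div (Real.hasDerivAt_cosh x)
    (ne_of_gt (Real.cosh_pos x))
  have hfun : Real.tanh = fun y => Real.sinh y / Real.cosh y := by
    funext y; exact Real.tanh_eq_sinh_div_cosh y
  rw [hfun]
  convert h using 2
  · rfl
  · rfl
  · rfl
  · have := Real.cosh_sq_sub_sinh_sq x
    nlinarith

lemma tanh_lipschitz : LipschitzWith 1 Real.tanh := by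
  apply lipschitzWith_of_nnnorm_deriv_le (fun x => (hasDerivAt_tanh x).differentiableAt)
  intro x
  rw [(hasDerivAt_tanh x).deriv, ← NNReal.coe_le_coe, coe_nnnorm, Real.norm_eq_abs]
  have h1 := Real.one_le_cosh x
  rw [abs_of_nonneg (by positivity), NNReal.coe_one, div_le_one (by positivity)]
  nlinarith

lemma tanh_abs_sub (a b : ℝ) : |Real.tanh a - Real.tanh b| ≤ |a - b| := by
  simpa [Real.dist_eq] using tanh_lipschitz.dist_le_mul a b

lemma tanhVec_lip {n : ℕ} (a b : EuclideanSpace ℝ (Fin n)) :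
    ‖tanhVec a - tanhVec b‖ ≤ ‖a - b‖ := by
  rw [EuclideanSpace.norm_eq, EuclideanSpace.norm_eq]
  apply Real.sqrt_le_sqrt
  apply Finset.sum_le_sum
  intro i _
  have h : ‖(tanhVec a - tanhVec b) i‖ ≤ ‖(a - b) i‖ := by
    simp only [tanhVec, PiLp.sub_apply, PiLp.toLp_apply, Real.norm_eq_abs]
    exact tanh_abs_sub (a i) (b i)
  exact pow_le_pow_left₀ (norm_nonneg _) h 2

lemma mulVecE_bound {m n : ℕ} (W : Matrix (Fin m) (Fin n) ℝ) (v : EuclideanSpace ℝ (Fin n)) :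
    ‖mulVecE W v‖ ≤ opNorm W * ‖v‖ :=
  (LinearMap.toContinuousLinearMap (Matrix.toEuclideanLin W)).le_opNorm v

/-- Echo state property: uniqueness of bounded bi-infinite state trajectories. -/
theorem esn_echo_state_property (N D : ℕ)
    (Wres : Matrix (Fin N) (Fin N) ℝ) (Win : Matrix (Fin N) (Fin D) ℝ)
    (hW : opNorm Wres < 1)
    (u : ℤ → EuclideanSpace ℝ (Fin D))
    (x x' : ℤ → EuclideanSpace ℝ (Fin N))
    (hxb : ∃ C : ℝ, ∀ t : ℤ, ‖x t‖ ≤ C)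
    (hx'b : ∃ C : ℝ, ∀ t : ℤ, ‖x' t‖ ≤ C)
    (hx : ∀ t : ℤ, x (t + 1) = tanhVec (mulVecE Wres (x t) + mulVecE Win (u (t + 1))))
    (hx' : ∀ t : ℤ, x' (t + 1) = tanhVec (mulVecE Wres (x' t) + mulVecE Win (u (t + 1)))) :
    ∀ t : ℤ, x t = x' t := by
  obtain ⟨C, hC⟩ := hxb
  obtain ⟨C', hC'⟩ := hx'b
  set ρ := opNorm Wres with hρ
  have hρ0 : 0 ≤ ρ := norm_nonneg _
  -- one-step contraction
  have hstep : ∀ t : ℤ, ‖x (t + 1) - x' (t + 1)‖ ≤ ρ * ‖x t - x' t‖ := by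
    intro t
    rw [hx t, hx' t]
    calc ‖tanhVec (mulVecE Wres (x t) + mulVecE Win (u (t + 1)))
          - tanhVec (mulVecE Wres (x' t) + mulVecE Win (u (t + 1)))‖
        ≤ ‖(mulVecE Wres (x t) + mulVecE Win (u (t + 1)))
          - (mulVecE Wres (x' t) + mulVecE Win (u (t + 1)))‖ := tanhVec_lip _ _
      _ = ‖mulVecE Wres (x t - x' t)‖ := by
          congr 1
          simp only [mulVecE, map_sub]
          abel
      _ ≤ ρ * ‖x t - x' t‖ := mulVecE_bound _ _
  -- iterate
  have hiter : ∀ t : ℤ, ∀ n : ℕ, ‖x t - x' t‖ ≤ ρ ^ n * ‖x (t - n) - x' (t - n)‖ := by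
    intro t n
    induction n generalizing t with
    | zero => simp
    | succ n ih =>
      calc ‖x t - x' t‖ ≤ ρ ^ n * ‖x (t - n) - x' (t - n)‖ := ih t
        _ ≤ ρ ^ n * (ρ * ‖x (t - n - 1) - x' (t - n - 1)‖) := by
            apply mul_le_mul_of_nonneg_left _ (pow_nonneg hρ0 n)
            have h := hstep (t - n - 1)
            simpa [sub_add_cancel] using h
        _ = ρ ^ (n + 1) * ‖x (t - (n + 1 : ℕ)) - x' (t - (n + 1 : ℕ))‖ := by
            have harg : (t - ((n : ℤ) + 1)) = t - n - 1 := by ring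
            rw [show ((n + 1 : ℕ) : ℤ) = (n : ℤ) + 1 by push_cast; ring, harg, pow_succ]
            ring
  intro t
  have hbound : ∀ n : ℕ, ‖x t - x' t‖ ≤ ρ ^ n * (C + C') := by
    intro n
    refine (hiter t n).trans ?_
    apply mul_le_mul_of_nonneg_left _ (pow_nonneg hρ0 n)
    calc ‖x (t - n) - x' (t - n)‖ ≤ ‖x (t - n)‖ + ‖x' (t - n)‖ := norm_sub_le _ _
      _ ≤ C + C' := add_le_add (hC _) (hC' _)
  have htend : Tendsto (fun n : ℕ => ρ ^ n * (C + C')) atTop (𝓝 0) := by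
    have := tendsto_pow_atTop_nhds_zero_of_lt_one hρ0 hW
    simpa using this.mul_const (C + C')
  have h0 : ‖x t - x' t‖ ≤ 0 := ge_of_tendsto' htend hbound
  have : x t - x' t = 0 := by
    rwa [← norm_le_zero_iff]
  exact sub_eq_zero.mp this
end

section
/- Two-layer case of the Deep-ESN stability theorem: let W^{res(1)} (N₁×N₁), W^{in(1)} (N₁×D), W^{enc(1)} (M×N₁), W^{res(2)} (N₂×N₂), and W^{in(2)} (N₂×M) be real matrices with ‖W^{res(1)}‖ₒₚ < 1 and ‖W^{res(2)}‖ₒₚ < 1, and let u : ℕ → ℝ^D be any input sequence. If x⁽¹⁾, x̃⁽¹⁾ : ℕ → ℝ^{N₁} and x⁽²⁾, x̃⁽²⁾ : ℕ → ℝ^{N₂} satisfy x⁽¹⁾(t+1) = tanh.(W^{res(1)} x⁽¹⁾(t) + W^{in(1)} u(t+1)) and x⁽²⁾(t+1) = tanh.(W^{res(2)} x⁽²⁾(t) + W^{in(2)} W^{enc(1)} x⁽¹⁾(t+1)) for all t (and likewise for the tilde sequences with the same u), then ‖x⁽²⁾(t) − x̃⁽²⁾(t)‖₂ → 0 as t →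 ∞. -/
open Filter Topology

lemma tanhVec_lipschitz {n : ℕ} (v w : EuclideanSpace ℝ (Fin n)) :
    ‖tanhVec v - tanhVec w‖ ≤ ‖v - w‖ := by
  rw [EuclideanSpace.norm_eq, EuclideanSpace.norm_eq]
  apply Real.sqrt_le_sqrt
  apply Finset.sum_le_sum
  intro i _
  have h := tanh_lipschitz.dist_le_mul (v i) (w i)
  simp only [NNReal.coe_one, one_mul, Real.dist_eq] at h
  have : |(tanhVec v - tanhVec w) i| ≤ |(v - w) i| := by
    simpa [tanhVec] using h
  simp only [Real.norm_eq_abs]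
  exact pow_le_pow_left₀ (abs_nonneg _) this 2

lemma mulVecE_norm_le {m n : ℕ} (W : Matrix (Fin m) (Fin n) ℝ) (x : EuclideanSpace ℝ (Fin n)) :
    ‖mulVecE W x‖ ≤ opNorm W * ‖x‖ :=
  (LinearMap.toContinuousLinearMap (Matrix.toEuclideanLin W)).le_opNorm x

lemma mulVecE_sub {m n : ℕ} (W : Matrix (Fin m) (Fin n) ℝ) (x y : EuclideanSpace ℝ (Fin n)) :
    mulVecE W x - mulVecE W y = mulVecE W (x - y) := by
  simp [mulVecE, map_sub]

lemma opNorm_nonneg' {m n : ℕ} (W : Matrix (Fin m) (Fin n) ℝ) : 0 ≤ opNorm W :=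
  norm_nonneg _

/-- Key convergence lemma: a nonnegative sequence contracted with a vanishing forcing goes to 0. -/
lemma tendsto_of_contract (c : ℝ) (hc0 : 0 ≤ c) (hc1 : c < 1)
    (y b : ℕ → ℝ) (hy0 : ∀ t, 0 ≤ y t)
    (hrec : ∀ t, y (t + 1) ≤ c * y t + b t)
    (hb : Tendsto b atTop (𝓝 0)) : Tendsto y atTop (𝓝 0) := by
  rw [Metric.tendsto_atTop] at hb ⊢
  intro ε hε
  have h1c : 0 < 1 - c := by linarith
  set B := ε * (1 - c) / 2 with hBdef
  have hB : 0 < B := by positivity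
  obtain ⟨T, hT⟩ := hb B hB
  have hTb : ∀ t ≥ T, b t < B := by
    intro t ht
    have := hT t ht
    rw [Real.dist_eq, sub_zero] at this
    exact (le_abs_self _).trans_lt this
  have key : ∀ n : ℕ, y (T + n) ≤ c ^ n * y T + B / (1 - c) := by
    intro n
    induction n with
    | zero => simp; positivity
    | succ n ih =>
      have h1 : y (T + n + 1) ≤ c * y (T + n) + b (T + n) := hrec (T + n)
      have h2 : b (T + n) ≤ B := (hTb (T + n) (Nat.le_add_right _ _)).le
      have h3 : c * y (T + n) ≤ c * (c ^ n * y T + B / (1 - c)) :=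
        mul_le_mul_of_nonneg_left ih hc0
      have : y (T + (n + 1)) ≤ c * (c ^ n * y T + B / (1 - c)) + B := by
        have : T + (n + 1) = T + n + 1 := by ring
        rw [this]; linarith
      refine this.trans ?_
      have hcB : c * (B / (1 - c)) + B ≤ B / (1 - c) := by
        have hQ : B / (1 - c) * (1 - c) = B := div_mul_cancel₀ _ h1c.ne'
        nlinarith [hQ]
      calc c * (c ^ n * y T + B / (1 - c)) + B
          = c ^ (n + 1) * y T + (c * (B / (1 - c)) + B) := by ring
        _ ≤ c ^ (n + 1) * y T + B / (1 - c) := by linarith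
  have hBε : B / (1 - c) = ε / 2 := by
    rw [hBdef]; field_simp
  have hpow : Tendsto (fun n : ℕ => c ^ n * y T) atTop (𝓝 0) := by
    simpa using (tendsto_pow_atTop_nhds_zero_of_lt_one hc0 hc1).mul_const (y T)
  rw [Metric.tendsto_atTop] at hpow
  obtain ⟨n₀, hn₀⟩ := hpow (ε / 2) (by positivity)
  refine ⟨T + n₀, fun t ht => ?_⟩
  have htT : T ≤ t := le_trans (Nat.le_add_right _ _) ht
  have hkey := key (t - T)
  rw [Nat.add_sub_cancel' htT] at hkey
  have hmono : c ^ (t - T) * y T ≤ c ^ n₀ * y T := by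
    apply mul_le_mul_of_nonneg_right _ (hy0 T)
    exact pow_le_pow_of_le_one hc0 hc1.le (by omega)
  have hn₀' := hn₀ n₀ le_rfl
  rw [Real.dist_eq, sub_zero] at hn₀'
  have h2 : c ^ n₀ * y T < ε / 2 := (le_abs_self _).trans_lt hn₀'
  rw [Real.dist_eq, sub_zero, abs_of_nonneg (hy0 t)]
  linarith [hkey, hBε ▸ hkey]

/-- Two-layer case of the Deep-ESN stability theorem. -/
theorem deep_esn_two_layer_stability (N₁ N₂ M D : ℕ)
    (Wres1 : Matrix (Fin N₁) (Fin N₁) ℝ) (Win1 : Matrix (Fin N₁) (Fin D) ℝ)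
    (Wenc1 : Matrix (Fin M) (Fin N₁) ℝ)
    (Wres2 : Matrix (Fin N₂) (Fin N₂) ℝ) (Win2 : Matrix (Fin N₂) (Fin M) ℝ)
    (hW1 : opNorm Wres1 < 1) (hW2 : opNorm Wres2 < 1)
    (u : ℕ → EuclideanSpace ℝ (Fin D))
    (x1 x1' : ℕ → EuclideanSpace ℝ (Fin N₁))
    (x2 x2' : ℕ → EuclideanSpace ℝ (Fin N₂))
    (hx1 : ∀ t, x1 (t + 1) = tanhVec (mulVecE Wres1 (x1 t) + mulVecE Win1 (u (t + 1))))
    (hx1' : ∀ t, x1' (t + 1) = tanhVec (mulVecE Wres1 (x1' t) + mulVecE Win1 (u (t + 1))))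
    (hx2 : ∀ t, x2 (t + 1) =
      tanhVec (mulVecE Wres2 (x2 t) + mulVecE Win2 (mulVecE Wenc1 (x1 (t + 1)))))
    (hx2' : ∀ t, x2' (t + 1) =
      tanhVec (mulVecE Wres2 (x2' t) + mulVecE Win2 (mulVecE Wenc1 (x1' (t + 1))))) :
    Tendsto (fun t : ℕ => ‖x2 t - x2' t‖) atTop (𝓝 0) := by
  set d1 : ℕ → ℝ := fun t => ‖x1 t - x1' t‖ with hd1
  set d2 : ℕ → ℝ := fun t => ‖x2 t - x2' t‖ with hd2
  have hd1rec : ∀ t, d1 (t + 1) ≤ opNorm Wres1 * d1 t := by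
    intro t
    rw [hd1]
    simp only
    rw [hx1 t, hx1' t]
    calc ‖tanhVec (mulVecE Wres1 (x1 t) + mulVecE Win1 (u (t + 1))) -
          tanhVec (mulVecE Wres1 (x1' t) + mulVecE Win1 (u (t + 1)))‖
        ≤ ‖(mulVecE Wres1 (x1 t) + mulVecE Win1 (u (t + 1))) -
            (mulVecE Wres1 (x1' t) + mulVecE Win1 (u (t + 1)))‖ := tanhVec_lipschitz _ _
      _ = ‖mulVecE Wres1 (x1 t - x1' t)‖ := by rw [← mulVecE_sub]; congr 1; abel
      _ ≤ opNorm Wres1 * ‖x1 t - x1' t‖ := mulVecE_norm_le _ _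
  have hd1tend : Tendsto d1 atTop (𝓝 0) :=
    tendsto_of_contract (opNorm Wres1) (opNorm_nonneg' _) hW1 d1 (fun _ => 0)
      (fun t => norm_nonneg _) (fun t => by simpa using hd1rec t) tendsto_const_nhds
  have hd2rec : ∀ t, d2 (t + 1) ≤ opNorm Wres2 * d2 t +
      opNorm Win2 * (opNorm Wenc1 * d1 (t + 1)) := by
    intro t
    rw [hd2]
    simp only
    rw [hx2 t, hx2' t]
    calc ‖tanhVec (mulVecE Wres2 (x2 t) + mulVecE Win2 (mulVecE Wenc1 (x1 (t + 1)))) -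
          tanhVec (mulVecE Wres2 (x2' t) + mulVecE Win2 (mulVecE Wenc1 (x1' (t + 1))))‖
        ≤ ‖(mulVecE Wres2 (x2 t) + mulVecE Win2 (mulVecE Wenc1 (x1 (t + 1)))) -
            (mulVecE Wres2 (x2' t) + mulVecE Win2 (mulVecE Wenc1 (x1' (t + 1))))‖ :=
          tanhVec_lipschitz _ _
      _ = ‖mulVecE Wres2 (x2 t - x2' t) +
            mulVecE Win2 (mulVecE Wenc1 (x1 (t + 1)) - mulVecE Wenc1 (x1' (t + 1)))‖ := by
          rw [← mulVecE_sub, ← mulVecE_sub Win2]; congr 1; abel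
      _ ≤ ‖mulVecE Wres2 (x2 t - x2' t)‖ +
            ‖mulVecE Win2 (mulVecE Wenc1 (x1 (t + 1)) - mulVecE Wenc1 (x1' (t + 1)))‖ :=
          norm_add_le _ _
      _ ≤ opNorm Wres2 * ‖x2 t - x2' t‖ +
            opNorm Win2 * ‖mulVecE Wenc1 (x1 (t + 1)) - mulVecE Wenc1 (x1' (t + 1))‖ :=
          add_le_add (mulVecE_norm_le _ _) (mulVecE_norm_le _ _)
      _ ≤ opNorm Wres2 * ‖x2 t - x2' t‖ +
            opNorm Win2 * (opNorm Wenc1 * ‖x1 (t + 1) - x1' (t + 1)‖) := by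
          refine add_le_add le_rfl (mul_le_mul_of_nonneg_left ?_ (opNorm_nonneg' Win2))
          rw [mulVecE_sub]
          exact mulVecE_norm_le _ _
  have hbtend : Tendsto (fun t => opNorm Win2 * (opNorm Wenc1 * d1 (t + 1))) atTop (𝓝 0) := by
    have h1 : Tendsto (fun t => d1 (t + 1)) atTop (𝓝 0) :=
      hd1tend.comp (tendsto_add_atTop_nat 1)
    simpa using (h1.const_mul (opNorm Wenc1)).const_mul (opNorm Win2)
  exact tendsto_of_contract (opNorm Wres2) (opNorm_nonneg' _) hW2 d2 _
    (fun t => norm_nonneg _) hd2rec hbtend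
end
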